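/- Fix positive integers N, D, K. Let x_i ∈ ℝ^D (i = 1,…,N) be feature vectors and y_{ik} ∈ {0,1} one-hot labels with Σ_k y_{ik} = 1 for each i. For W ∈ ℝ^{D×K} and b ∈ ℝ^K define logits g_{ik} = Σ_{j=1}^D x_{ij}·W_{jk} + b_k, softmax probabilities p_{ik} = exp(g_{ik})/Σ_{k'} exp(g_{ik'}), and the empirical cross-entropy loss L̂(W,b) = (1/N) Σ_{i=1}^N ( −Σ_k y_{ik}·g_{ik} + log Σ_k exp(g_{ik}) ). Then the trace of the Hessian of L̂ at (W,b), namely Σ_{j,k} ∂²L̂/∂W_{jk}² + Σ_k ∂²L̂/∂b_k², equals (1/N) Σ_{i=1}^N (1 + ‖x_i‖²)·(1 − Σ_{k=1}^K p_{ik}²), and in particular this quantity is nonnegative. -/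

import Mathlib

set_option maxHeartbeats 1000000

open scoped BigOperators

/-- Empirical cross-entropy loss `L̂(W,b)` of a linear (softmax) classifier with features
`x i : Fin D → ℝ`, one-hot labels `y i : Fin K → ℝ`, weights `W` and bias `b`. -/
noncomputable def ceLoss (N D K : ℕ) (x : Fin N → Fin D → ℝ) (y : Fin N → Fin K → ℝ)
    (W : Fin D → Fin K → ℝ) (b : Fin K → ℝ) : ℝ :=
  (N : ℝ)⁻¹ * ∑ i, (-(∑ k, y i k * ((∑ j, x i j * W j k) + b k))
      + Real.log (∑ k, Real.exp ((∑ j, x i j * W j k) + b k)))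

/-- Softmax probabilities `p_{ik}` of the linear classifier. -/
noncomputable def smax (N D K : ℕ) (x : Fin N → Fin D → ℝ)
    (W : Fin D → Fin K → ℝ) (b : Fin K → ℝ) (i : Fin N) (k : Fin K) : ℝ :=
  Real.exp ((∑ j, x i j * W j k) + b k) /
    ∑ k', Real.exp ((∑ j, x i j * W j k') + b k')

private lemma arith_aux (E Z cc : ℝ) (hZ : Z ≠ 0) :
    (E * cc * cc * Z - E * cc * (E * cc)) / Z ^ 2 = cc ^ 2 * (E / Z) * (1 - E / Z) := by
  field_simp

/-- Perturbed logits along a single coordinate direction. -/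
noncomputable def gfun {N K : ℕ} (a : Fin N → Fin K → ℝ) (c : Fin N → ℝ) (k : Fin K)
    (t₀ : ℝ) (i : Fin N) (k' : Fin K) (t : ℝ) : ℝ :=
  a i k' + if k' = k then c i * (t - t₀) else 0

/-- Cross-entropy loss along a single coordinate direction. -/
noncomputable def lineF {N K : ℕ} (a yv : Fin N → Fin K → ℝ) (c : Fin N → ℝ) (k : Fin K)
    (t₀ : ℝ) (t : ℝ) : ℝ :=
  (N : ℝ)⁻¹ * ∑ i, (-(∑ k', yv i k' * gfun a c k t₀ i k' t)
      + Real.log (∑ k', Real.exp (gfun a c k t₀ i k' t)))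

lemma full_d2 {N K : ℕ} (a yv : Fin N → Fin K → ℝ) (c : Fin N → ℝ) (k : Fin K) (t₀ : ℝ) :
    iteratedDeriv 2 (lineF a yv c k t₀) t₀
    = (N : ℝ)⁻¹ * ∑ i, (c i) ^ 2 * (Real.exp (a i k) / ∑ k', Real.exp (a i k'))
        * (1 - Real.exp (a i k) / ∑ k', Real.exp (a i k')) := by
  have hg : ∀ i k' t, HasDerivAt (fun t => gfun a c k t₀ i k' t) (if k' = k then c i else 0) t := by
    intro i k' t
    by_cases h : k' = k
    · simp only [gfun, h, if_pos rfl]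
      simpa using (((hasDerivAt_id t).sub_const t₀).const_mul (c i)).const_add (a i k)
    · simp only [gfun, if_neg h]
      simpa using hasDerivAt_const t (a i k' + 0)
  have hZpos : ∀ i t, 0 < ∑ k', Real.exp (gfun a c k t₀ i k' t) := by
    intro i t
    exact Finset.sum_pos (fun k' _ => Real.exp_pos _) ⟨k, Finset.mem_univ k⟩
  have hZ : ∀ i t, HasDerivAt (fun t => ∑ k', Real.exp (gfun a c k t₀ i k' t))
      (Real.exp (gfun a c k t₀ i k t) * c i) t := by
    intro i t
    have h2 := HasDerivAt.fun_sum
      (fun k' (_ : k' ∈ Finset.univ) => (hg i k' t).exp)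
    have h3 : ∑ k', Real.exp (gfun a c k t₀ i k' t) * (if k' = k then c i else 0)
        = Real.exp (gfun a c k t₀ i k t) * c i := by
      rw [Finset.sum_congr rfl (fun k' _ => by rw [mul_ite, mul_zero])]
      simp
    rwa [h3] at h2
  have hF : ∀ t, HasDerivAt (lineF a yv c k t₀)
      ((N : ℝ)⁻¹ * ∑ i, (-(yv i k * c i)
        + Real.exp (gfun a c k t₀ i k t) * c i / ∑ k', Real.exp (gfun a c k t₀ i k' t))) t := by
    intro t
    apply HasDerivAt.const_mul
    apply HasDerivAt.fun_sum
    intro i _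
    have h1 : ∀ k' ∈ Finset.univ, HasDerivAt (fun t => yv i k' * gfun a c k t₀ i k' t)
        (yv i k' * (if k' = k then c i else 0)) t := fun k' _ => (hg i k' t).const_mul _
    have h2 := HasDerivAt.fun_sum h1
    have h3 : ∑ k', yv i k' * (if k' = k then c i else 0) = yv i k * c i := by
      rw [Finset.sum_congr rfl (fun k' _ => by rw [mul_ite, mul_zero])]
      simp
    rw [h3] at h2
    exact h2.neg.add ((hZ i t).log (hZpos i t).ne')
  have hderivF : deriv (lineF a yv c k t₀) = fun t => (N : ℝ)⁻¹ * ∑ i, (-(yv i k * c i)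
        + Real.exp (gfun a c k t₀ i k t) * c i / ∑ k', Real.exp (gfun a c k t₀ i k' t)) :=
    funext fun t => (hF t).deriv
  have hg0 : ∀ i k', gfun a c k t₀ i k' t₀ = a i k' := by
    intro i k'; simp [gfun]
  have hD1 : HasDerivAt (fun t => (N : ℝ)⁻¹ * ∑ i, (-(yv i k * c i)
        + Real.exp (gfun a c k t₀ i k t) * c i / ∑ k', Real.exp (gfun a c k t₀ i k' t)))
      ((N : ℝ)⁻¹ * ∑ i, (c i) ^ 2
        * (Real.exp (a i k) / ∑ k', Real.exp (a i k'))
        * (1 - Real.exp (a i k) / ∑ k', Real.exp (a i k'))) t₀ := by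
    apply HasDerivAt.const_mul
    apply HasDerivAt.fun_sum
    intro i _
    have hnum : HasDerivAt (fun t => Real.exp (gfun a c k t₀ i k t) * c i)
        (Real.exp (gfun a c k t₀ i k t₀) * c i * c i) t₀ := by
      have h0 := ((hg i k t₀).exp).mul_const (c i)
      simpa using h0
    have hdiv := hnum.div (hZ i t₀) (hZpos i t₀).ne'
    have h2 := hdiv.const_add (-(yv i k * c i))
    have hZ0 : (0:ℝ) < ∑ k', Real.exp (a i k') :=
      Finset.sum_pos (fun k' _ => Real.exp_pos _) ⟨k, Finset.mem_univ k⟩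
    have hval : (Real.exp (gfun a c k t₀ i k t₀) * c i * c i
            * (∑ k', Real.exp (gfun a c k t₀ i k' t₀))
          - Real.exp (gfun a c k t₀ i k t₀) * c i * (Real.exp (gfun a c k t₀ i k t₀) * c i))
          / (∑ k', Real.exp (gfun a c k t₀ i k' t₀)) ^ 2
        = (c i) ^ 2 * (Real.exp (a i k) / ∑ k', Real.exp (a i k'))
          * (1 - Real.exp (a i k) / ∑ k', Real.exp (a i k')) := by
      simp only [hg0]
      exact arith_aux _ _ _ hZ0.ne'
    rw [hval] at h2
    exact h2
  rw [iteratedDeriv_succ, iteratedDeriv_one, hderivF]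
  exact hD1.deriv

lemma logitW {N D K : ℕ} (x : Fin N → Fin D → ℝ) (W : Fin D → Fin K → ℝ) (b : Fin K → ℝ)
    (j : Fin D) (k : Fin K) (i : Fin N) (k' : Fin K) (t : ℝ) :
    (∑ j', x i j' * (Function.update W j (Function.update (W j) k t)) j' k') + b k'
    = ((∑ j', x i j' * W j' k') + b k')
        + (if k' = k then (x i j) * (t - W j k) else 0) := by
  by_cases h : k' = k
  · subst h
    have h1 : ∑ j', x i j' * (Function.update W j (Function.update (W j) k' t)) j' k'
        = ∑ j', (x i j' * W j' k' + if j' = j then x i j' * (t - W j' k') else 0) := by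
      refine Finset.sum_congr rfl (fun j' _ => ?_)
      by_cases hj : j' = j
      · subst hj; simp [Function.update_apply]; ring
      · simp [Function.update_apply, hj]
    rw [h1, Finset.sum_add_distrib]
    simp [Finset.sum_ite_eq']
    ring
  · have h1 : ∑ j', x i j' * (Function.update W j (Function.update (W j) k t)) j' k'
        = ∑ j', x i j' * W j' k' := by
      refine Finset.sum_congr rfl (fun j' _ => ?_)
      by_cases hj : j' = j
      · subst hj; simp [Function.update_apply, h]
      · simp [Function.update_apply, hj]
    rw [h1, if_neg h, add_zero]

lemma logitB {N D K : ℕ} (x : Fin N → Fin D → ℝ) (W : Fin D → Fin K → ℝ) (b : Fin K → ℝ)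
    (k : Fin K) (i : Fin N) (k' : Fin K) (t : ℝ) :
    (∑ j', x i j' * W j' k') + (Function.update b k t) k'
    = ((∑ j', x i j' * W j' k') + b k')
        + (if k' = k then (1 : ℝ) * (t - b k) else 0) := by
  by_cases h : k' = k
  · subst h; simp [Function.update_apply]
  · simp [Function.update_apply, h]

/-- Closed-form trace of the Hessian of the empirical cross-entropy loss over the top-layer
parameters `(W, b)`: `Σ_{j,k} ∂²L̂/∂W_{jk}² + Σ_k ∂²L̂/∂b_k²
  = (1/N) Σ_i (1 + ‖x_i‖²)(1 − Σ_k p_{ik}²)`, and this quantity is nonnegative. -/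
theorem ceLoss_hessian_trace (N D K : ℕ) (hN : 0 < N) (hD : 0 < D) (hK : 0 < K)
    (x : Fin N → Fin D → ℝ) (y : Fin N → Fin K → ℝ)
    (hy01 : ∀ i k, y i k = 0 ∨ y i k = 1) (hy1 : ∀ i, ∑ k, y i k = 1)
    (W : Fin D → Fin K → ℝ) (b : Fin K → ℝ) :
    ((∑ j, ∑ k, iteratedDeriv 2
          (fun t : ℝ =>
            ceLoss N D K x y (Function.update W j (Function.update (W j) k t)) b)
          (W j k))
        + ∑ k, iteratedDeriv 2
            (fun t : ℝ => ceLoss N D K x y W (Function.update b k t)) (b k)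
      = (N : ℝ)⁻¹ * ∑ i, (1 + ∑ j, (x i j) ^ 2) * (1 - ∑ k, (smax N D K x W b i k) ^ 2))
    ∧ 0 ≤ (N : ℝ)⁻¹ * ∑ i, (1 + ∑ j, (x i j) ^ 2) * (1 - ∑ k, (smax N D K x W b i k) ^ 2) := by
  classical
  set a : Fin N → Fin K → ℝ := fun i k' => (∑ j', x i j' * W j' k') + b k' with ha
  set q : Fin N → Fin K → ℝ := fun i k => smax N D K x W b i k with hqdef
  have hq : ∀ i k, Real.exp (a i k) / ∑ k', Real.exp (a i k') = q i k := fun _ _ => rfl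
  have hZ0 : ∀ i, (0:ℝ) < ∑ k', Real.exp (a i k') := fun i =>
    Finset.sum_pos (fun k' _ => Real.exp_pos _) ⟨(⟨0, hK⟩ : Fin K), Finset.mem_univ _⟩
  have hq01 : ∀ i k, 0 ≤ q i k ∧ q i k ≤ 1 := by
    intro i k
    constructor
    · exact div_nonneg (Real.exp_pos _).le (hZ0 i).le
    · rw [← hq i k, div_le_one (hZ0 i)]
      exact Finset.single_le_sum (fun k' _ => (Real.exp_pos (a i k')).le) (Finset.mem_univ k)
  have hq1 : ∀ i, ∑ k, q i k = 1 := by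
    intro i
    have : ∑ k, q i k = (∑ k, Real.exp (a i k)) / ∑ k', Real.exp (a i k') := by
      rw [Finset.sum_div]
      exact Finset.sum_congr rfl fun k _ => (hq i k).symm
    rw [this, div_self (hZ0 i).ne']
  have hS : ∀ i, ∑ k, q i k * (1 - q i k) = 1 - ∑ k, q i k ^ 2 := by
    intro i
    rw [Finset.sum_congr rfl (fun k _ => by ring :
        ∀ k ∈ Finset.univ, q i k * (1 - q i k) = q i k - q i k ^ 2),
      Finset.sum_sub_distrib, hq1 i]
  -- identify the W-direction second derivatives
  have hWfun : ∀ (j : Fin D) (k : Fin K),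
      (fun t : ℝ => ceLoss N D K x y (Function.update W j (Function.update (W j) k t)) b)
        = lineF a y (fun i => x i j) k (W j k) := by
    intro j k
    funext t
    simp only [ceLoss, lineF, gfun, logitW, ha]
  have hBfun : ∀ (k : Fin K),
      (fun t : ℝ => ceLoss N D K x y W (Function.update b k t))
        = lineF a y (fun _ => (1:ℝ)) k (b k) := by
    intro k
    funext t
    simp only [ceLoss, lineF, gfun, logitB, ha]
  have hW : ∀ (j : Fin D) (k : Fin K),
      iteratedDeriv 2 (fun t : ℝ =>
          ceLoss N D K x y (Function.update W j (Function.update (W j) k t)) b) (W j k)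
        = (N : ℝ)⁻¹ * ∑ i, (x i j) ^ 2 * (q i k * (1 - q i k)) := by
    intro j k
    rw [hWfun j k, full_d2]
    refine congrArg _ (Finset.sum_congr rfl fun i _ => ?_)
    rw [hq]
    ring
  have hB : ∀ (k : Fin K),
      iteratedDeriv 2 (fun t : ℝ => ceLoss N D K x y W (Function.update b k t)) (b k)
        = (N : ℝ)⁻¹ * ∑ i, q i k * (1 - q i k) := by
    intro k
    rw [hBfun k, full_d2]
    refine congrArg _ (Finset.sum_congr rfl fun i _ => ?_)
    rw [hq]
    ring
  constructor
  · simp only [hW, hB]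
    rw [show (∑ j, ∑ k, (N : ℝ)⁻¹ * ∑ i, (x i j) ^ 2 * (q i k * (1 - q i k)))
        = (N : ℝ)⁻¹ * ∑ j, ∑ k, ∑ i, (x i j) ^ 2 * (q i k * (1 - q i k)) by
      rw [Finset.mul_sum]
      exact Finset.sum_congr rfl fun j _ => by rw [Finset.mul_sum]]
    rw [show (∑ k, (N : ℝ)⁻¹ * ∑ i, q i k * (1 - q i k))
        = (N : ℝ)⁻¹ * ∑ k, ∑ i, q i k * (1 - q i k) by rw [Finset.mul_sum]]
    rw [← mul_add]
    congr 1
    have hA : ∑ j, ∑ k, ∑ i, (x i j) ^ 2 * (q i k * (1 - q i k))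
        = ∑ i, (∑ j, (x i j) ^ 2) * ∑ k, q i k * (1 - q i k) := by
      have h1 : ∀ j : Fin D, ∑ k, ∑ i, (x i j) ^ 2 * (q i k * (1 - q i k))
          = ∑ i, (x i j) ^ 2 * ∑ k, q i k * (1 - q i k) := by
        intro j
        rw [Finset.sum_comm]
        exact Finset.sum_congr rfl fun i _ => (Finset.mul_sum _ _ _).symm
      rw [Finset.sum_congr rfl fun j _ => h1 j, Finset.sum_comm]
      exact Finset.sum_congr rfl fun i _ => (Finset.sum_mul _ _ _).symm
    have hBsum : ∑ k, ∑ i, q i k * (1 - q i k) = ∑ i, ∑ k, q i k * (1 - q i k) :=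
      Finset.sum_comm
    rw [hA, hBsum, ← Finset.sum_add_distrib]
    refine Finset.sum_congr rfl fun i _ => ?_
    rw [hS i]
    ring
  · refine mul_nonneg (by positivity) (Finset.sum_nonneg fun i _ => ?_)
    refine mul_nonneg (by positivity) ?_
    have hle : ∑ k, (smax N D K x W b i k) ^ 2 ≤ 1 := by
      rw [← hq1 i]
      refine Finset.sum_le_sum fun k _ => ?_
      have h0 := (hq01 i k).1
      have h1 := (hq01 i k).2
      calc (smax N D K x W b i k) ^ 2 = q i k ^ 2 := by rw [hqdef]
        _ ≤ q i k ^ 1 := pow_le_pow_of_le_one h0 h1 (by norm_num)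
        _ = q i k := pow_one _
    linarith
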